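/- Let Φ = (A; {E_i}_{i=0}^d; A*; {E*_i}_{i=0}^d) be a Leonard system on V, with ν, ρ, ρ*, A_i = ν ρ*(E*_i), and A*_i = ν ρ(E_i) as in the context. For 0 ≤ i, j ≤ d let μ_{ij} ∈ F and μ*_{ij} ∈ F be the scalars determined by A_i E_j = μ_{ij} E_j and A*_i E*_j = μ*_{ij} E*_j (these exist since A_i ∈ ⟨A⟩ and A*_i ∈ ⟨A*⟩). Then μ_{ij} μ*_{j0} = μ*_{ji} μ_{i0} for all 0 ≤ i, j ≤ d. (In the paper's notation this reads v_i(θ_j)/k_i = v*_j(θ*_i)/k*_j, since μ_{i0} = k_i and μ*_{j0} = k*_j are nonzero.) -/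

import Mathlib

noncomputable section

open Finset

variable {F V : Type*} [Field F] [AddCommGroup V] [Module F V]

/-- A matrix is irreducible tridiagonal: each nonzero entry lies on the diagonal,
subdiagonal or superdiagonal, and every subdiagonal and superdiagonal entry is nonzero. -/
def IsIrredTridiag {n : ℕ} {F : Type*} [Field F] (M : Matrix (Fin n) (Fin n) F) : Prop :=
  (∀ i j : Fin n, ((i : ℕ) + 1 < (j : ℕ) ∨ (j : ℕ) + 1 < (i : ℕ)) → M i j = 0) ∧
  (∀ i j : Fin n, ((i : ℕ) + 1 = (j : ℕ) ∨ (j : ℕ) + 1 = (i : ℕ)) → M i j ≠ 0)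

/-- A Leonard pair on `V` (of dimension `d+1`): there is a basis in which `A` is
irreducible tridiagonal and `A*` diagonal, and a basis in which `A*` is irreducible
tridiagonal and `A` diagonal. -/
def IsLeonardPair (d : ℕ) (A Astar : Module.End F V) : Prop :=
  (∃ b : Module.Basis (Fin (d + 1)) F V,
    IsIrredTridiag (LinearMap.toMatrix b b A) ∧ (LinearMap.toMatrix b b Astar).IsDiag) ∧
  (∃ b : Module.Basis (Fin (d + 1)) F V,
    IsIrredTridiag (LinearMap.toMatrix b b Astar) ∧ (LinearMap.toMatrix b b A).IsDiag)

/-- A Boltzmann pair for the Leonard pair `A, A*` : invertible `W ∈ ⟨A⟩`,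
`W* ∈ ⟨A*⟩` with `W A* W⁻¹ = (W*)⁻¹ A W*`. -/
def IsBoltzmannPair (A Astar W Wstar : Module.End F V) : Prop :=
  W ∈ Algebra.adjoin F {A} ∧ Wstar ∈ Algebra.adjoin F {Astar} ∧
  IsUnit W ∧ IsUnit Wstar ∧
  W * Astar * Ring.inverse W = Ring.inverse Wstar * A * Wstar

/-- `E` is an ordering of the primitive idempotents of the multiplicity-free map `B`. -/
def IsIdemOrdering (d : ℕ) (B : Module.End F V) (E : Fin (d + 1) → Module.End F V) : Prop :=
  (∀ i, E i ≠ 0) ∧ (∀ i j, E i * E j = if i = j then E i else 0) ∧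
  (∑ i, E i = 1) ∧ ∃ θ : Fin (d + 1) → F, Function.Injective θ ∧ B = ∑ i, θ i • E i

/-- `E` is a standard ordering of the primitive idempotents of `B` (relative to `C`):
choosing nonzero `vᵢ ∈ Eᵢ V`, the matrix of `C` in the basis `vᵢ` is irreducible
tridiagonal (and the matrix of `B` is diagonal). -/
def IsStandardOrdering (d : ℕ) (B C : Module.End F V)
    (E : Fin (d + 1) → Module.End F V) : Prop :=
  IsIdemOrdering d B E ∧
  ∃ b : Module.Basis (Fin (d + 1)) F V, (∀ i, E i (b i) = b i) ∧
    IsIrredTridiag (LinearMap.toMatrix b b C) ∧ (LinearMap.toMatrix b b B).IsDiag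

/-- A Leonard system on `V`. -/
def IsLeonardSystem (d : ℕ) (A Astar : Module.End F V)
    (E Estar : Fin (d + 1) → Module.End F V) : Prop :=
  IsLeonardPair d A Astar ∧ IsStandardOrdering d A Astar E ∧ IsStandardOrdering d Astar A Estar

private lemma aw_spectral {d : ℕ} (B : Module.End F V) (E : Fin (d + 1) → Module.End F V)
    (θ : Fin (d + 1) → F)
    (hEE : ∀ i j, E i * E j = if i = j then E i else 0)
    (hB : B = ∑ i, θ i • E i) (j : Fin (d + 1)) :
    B * E j = θ j • E j ∧ E j * B = θ j • E j := by
  constructor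
  · rw [hB, Finset.sum_mul]
    have : ∀ m : Fin (d+1), (θ m • E m) * E j = if m = j then θ m • E m else 0 := by
      intro m
      rw [smul_mul_assoc, hEE]
      split <;> simp
    simp only [this]
    simp
  · rw [hB, Finset.mul_sum]
    have : ∀ m : Fin (d+1), E j * (θ m • E m) = if m = j then θ m • E m else 0 := by
      intro m
      rw [mul_smul_comm, hEE]
      by_cases h : j = m
      · subst h; simp
      · rw [if_neg h, if_neg (Ne.symm h), smul_zero]
    simp only [this]
    simp

private lemma aw_fixes {d : ℕ} (σ : Module.End F V →ₗ[F] Module.End F V)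
    (hmul : ∀ X Y, σ (X * Y) = σ Y * σ X) (hone : σ 1 = 1)
    (B : Module.End F V) (hσB : σ B = B)
    (E : Fin (d + 1) → Module.End F V) (θ : Fin (d + 1) → F) (hθ : Function.Injective θ)
    (hEE : ∀ i j, E i * E j = if i = j then E i else 0)
    (hsum : ∑ i, E i = 1) (hB : B = ∑ i, θ i • E i) :
    ∀ j, σ (E j) = E j := by
  have spec := fun m => aw_spectral B E θ hEE hB m
  have hFB : ∀ m, σ (E m) * B = θ m • σ (E m) := by
    intro m
    have h := congrArg σ (spec m).1
    rw [hmul, hσB, map_smul] at h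
    exact h
  have hBF : ∀ m, B * σ (E m) = θ m • σ (E m) := by
    intro m
    have h := congrArg σ (spec m).2
    rw [hmul, hσB, map_smul] at h
    exact h
  have hEF : ∀ i m, i ≠ m → E i * σ (E m) = 0 := by
    intro i m him
    have h1 : B * (E i * σ (E m)) = θ i • (E i * σ (E m)) := by
      rw [← mul_assoc, (spec i).1, smul_mul_assoc]
    have h2 : B * (E i * σ (E m)) = θ m • (E i * σ (E m)) := by
      have hcomm : B * E i = E i * B := (spec i).1.trans (spec i).2.symm
      rw [← mul_assoc, hcomm, mul_assoc, hBF, mul_smul_comm]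
    have h3 : (θ i - θ m) • (E i * σ (E m)) = 0 := by
      rw [sub_smul, ← h1, ← h2, sub_self]
    have h4 : θ i - θ m ≠ 0 := sub_ne_zero.mpr fun h => him (hθ h)
    have h5 := congrArg (fun X => (θ i - θ m)⁻¹ • X) h3
    simpa [smul_smul, inv_mul_cancel₀ h4] using h5
  have hsumF : ∑ m, σ (E m) = 1 := by rw [← map_sum, hsum, hone]
  intro j
  have e1 : E j * σ (E j) = E j := by
    have hs : ∑ m, E j * σ (E m) = E j * σ (E j) :=
      Finset.sum_eq_single j (fun m _ hm => hEF j m (Ne.symm hm)) (by simp)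
    calc E j * σ (E j) = ∑ m, E j * σ (E m) := hs.symm
      _ = E j * ∑ m, σ (E m) := (Finset.mul_sum _ _ _).symm
      _ = E j := by rw [hsumF, mul_one]
  have e2 : σ (E j) = E j * σ (E j) := by
    have hs : ∑ m, E m * σ (E j) = E j * σ (E j) :=
      Finset.sum_eq_single j (fun m _ hm => hEF m j hm) (by simp)
    calc σ (E j) = (∑ m, E m) * σ (E j) := by rw [hsum, one_mul]
      _ = ∑ m, E m * σ (E j) := Finset.sum_mul _ _ _
      _ = E j * σ (E j) := hs
  rw [e2, e1]

private lemma aw_antihom {d : ℕ} (A As : Module.End F V) (b : Module.Basis (Fin (d + 1)) F V)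
    (hTri : IsIrredTridiag (LinearMap.toMatrix b b A))
    (hDiag : (LinearMap.toMatrix b b As).IsDiag) :
    ∃ σ : Module.End F V →ₗ[F] Module.End F V,
      (∀ X Y, σ (X * Y) = σ Y * σ X) ∧ σ 1 = 1 ∧ σ A = A ∧ σ As = As := by
  set M : Matrix (Fin (d + 1)) (Fin (d + 1)) F := LinearMap.toMatrix b b A with hMdef
  set g : ℕ → F := fun m => if h : m + 1 < d + 1 then
      M ⟨m, by omega⟩ ⟨m + 1, h⟩ / M ⟨m + 1, h⟩ ⟨m, by omega⟩ else 1 with hgdef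
  set k : Fin (d + 1) → F := fun p => ∏ m ∈ Finset.range (p : ℕ), g m with hkdef
  have hgne : ∀ m, g m ≠ 0 := by
    intro m
    rw [hgdef]
    by_cases h : m + 1 < d + 1
    · simp only [dif_pos h]
      exact div_ne_zero (hTri.2 _ _ (Or.inl rfl)) (hTri.2 _ _ (Or.inr rfl))
    · simp only [dif_neg h]
      exact one_ne_zero
  have hkne : ∀ p, k p ≠ 0 := fun p => Finset.prod_ne_zero_iff.mpr fun m _ => hgne m
  have hswap : ∀ p q, M q p * k q = k p * M p q := by
    intro p q
    by_cases h1 : (p : ℕ) + 1 < (q : ℕ)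
    · rw [hTri.1 p q (Or.inl h1), hTri.1 q p (Or.inr h1), zero_mul, mul_zero]
    by_cases h2 : (q : ℕ) + 1 < (p : ℕ)
    · rw [hTri.1 p q (Or.inr h2), hTri.1 q p (Or.inl h2), zero_mul, mul_zero]
    by_cases h3 : (p : ℕ) = (q : ℕ)
    · have : p = q := Fin.ext h3
      subst this; ring
    by_cases h4 : (p : ℕ) + 1 = (q : ℕ)
    · -- q = p + 1
      obtain ⟨qv, hql⟩ := q
      simp only [Fin.val_mk] at h4
      subst h4
      have hkq : k ⟨(p : ℕ) + 1, hql⟩ = k p * g (p : ℕ) := by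
        rw [hkdef]
        exact Finset.prod_range_succ g (p : ℕ)
      have hgp : g (p : ℕ) = M p ⟨(p : ℕ) + 1, hql⟩ / M ⟨(p : ℕ) + 1, hql⟩ p := by
        rw [hgdef]
        simp only [dif_pos hql]
      have hne : M ⟨(p : ℕ) + 1, hql⟩ p ≠ 0 := hTri.2 _ _ (Or.inr rfl)
      rw [hkq, hgp]
      field_simp
    by_cases h5 : (q : ℕ) + 1 = (p : ℕ)
    · obtain ⟨pv, hpl⟩ := p
      simp only [Fin.val_mk] at h5
      subst h5
      have hkp : k ⟨(q : ℕ) + 1, hpl⟩ = k q * g (q : ℕ) := by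
        rw [hkdef]
        exact Finset.prod_range_succ g (q : ℕ)
      have hgq : g (q : ℕ) = M q ⟨(q : ℕ) + 1, hpl⟩ / M ⟨(q : ℕ) + 1, hpl⟩ q := by
        rw [hgdef]
        simp only [dif_pos hpl]
      have hne : M ⟨(q : ℕ) + 1, hpl⟩ q ≠ 0 := hTri.2 _ _ (Or.inr rfl)
      rw [hkp, hgq]
      field_simp
    omega
  -- the conjugation on matrices
  set conj : Matrix (Fin (d + 1)) (Fin (d + 1)) F → Matrix (Fin (d + 1)) (Fin (d + 1)) F :=
    fun P => Matrix.of fun p q => (k p)⁻¹ * P q p * k q with hconjdef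
  have hconj_mul : ∀ P Q, conj (P * Q) = conj Q * conj P := by
    intro P Q
    ext p q
    simp only [hconjdef, Matrix.of_apply, Matrix.mul_apply]
    rw [Finset.mul_sum, Finset.sum_mul]
    apply Finset.sum_congr rfl
    intro m _
    field_simp
    rw [div_eq_div_iff (hkne p) (mul_ne_zero (hkne p) (hkne m))]
    ring
  refine ⟨{ toFun := fun X => Matrix.toLin b b (conj (LinearMap.toMatrix b b X)),
            map_add' := ?_, map_smul' := ?_ }, ?_, ?_, ?_, ?_⟩
  · intro X Y
    have h : conj (LinearMap.toMatrix b b (X + Y))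
        = conj (LinearMap.toMatrix b b X) + conj (LinearMap.toMatrix b b Y) := by
      ext p q
      simp only [hconjdef, Matrix.of_apply, map_add, Matrix.add_apply]
      ring
    rw [h, map_add]
  · intro c X
    have h : conj (LinearMap.toMatrix b b (c • X)) = c • conj (LinearMap.toMatrix b b X) := by
      ext p q
      simp only [hconjdef, Matrix.of_apply, map_smul, Matrix.smul_apply, smul_eq_mul]
      ring
    dsimp only [RingHom.id_apply]
    rw [h, map_smul]
  · intro X Y
    simp only [LinearMap.coe_mk, AddHom.coe_mk]
    rw [show (LinearMap.toMatrix b b) (X * Y)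
        = (LinearMap.toMatrix b b X) * (LinearMap.toMatrix b b Y) from
        LinearMap.toMatrix_mul b X Y, hconj_mul, Matrix.toLin_mul b b b]
    rfl
  · simp only [LinearMap.coe_mk, AddHom.coe_mk]
    have h : conj (LinearMap.toMatrix b b 1) = 1 := by
      ext p q
      simp only [hconjdef, Matrix.of_apply, LinearMap.toMatrix_one]
      by_cases h : p = q
      · subst h
        simp [Matrix.one_apply_eq, inv_mul_cancel₀ (hkne p)]
      · simp [Matrix.one_apply_ne (show q ≠ p from Ne.symm h), Matrix.one_apply_ne h]
    rw [h, Matrix.toLin_one]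
    rfl
  · simp only [LinearMap.coe_mk, AddHom.coe_mk]
    have h : conj M = M := by
      ext p q
      simp only [hconjdef, Matrix.of_apply]
      rw [mul_assoc, hswap p q, ← mul_assoc, inv_mul_cancel₀ (hkne p), one_mul]
    rw [← hMdef, h, hMdef, Matrix.toLin_toMatrix]
  · simp only [LinearMap.coe_mk, AddHom.coe_mk]
    have h : conj (LinearMap.toMatrix b b As) = LinearMap.toMatrix b b As := by
      ext p q
      simp only [hconjdef, Matrix.of_apply]
      by_cases h : p = q
      · subst h
        rw [mul_comm ((k p)⁻¹) _, mul_assoc, inv_mul_cancel₀ (hkne p), mul_one]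
      · rw [hDiag (show q ≠ p from Ne.symm h), hDiag h, mul_zero, zero_mul]
    rw [h, Matrix.toLin_toMatrix]

/-- the Askey–Wilson duality `vᵢ(θⱼ)/kᵢ = v*ⱼ(θ*ᵢ)/k*ⱼ`, stated as
`μᵢⱼ μ*ⱼ₀ = μ*ⱼᵢ μᵢ₀`, where `Aᵢ Eⱼ = μᵢⱼ Eⱼ` and `A*ᵢ E*ⱼ = μ*ᵢⱼ E*ⱼ`. -/
theorem askey_wilson_duality {F V : Type*} [Field F] [AddCommGroup V] [Module F V]
    (d : ℕ) (A Astar : Module.End F V) (E Estar : Fin (d + 1) → Module.End F V)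
    (hLS : IsLeonardSystem d A Astar E Estar)
    (ν : F) (hν0 : ν ≠ 0)
    (hν1 : ν • (E 0 * Estar 0 * E 0) = E 0)
    (hν2 : ν • (Estar 0 * E 0 * Estar 0) = Estar 0)
    (Ai Asi : Fin (d + 1) → Module.End F V)
    (hAi : ∀ i, Ai i ∈ Algebra.adjoin F {A} ∧
      Ai i * Estar 0 = ν • (Estar i * E 0 * Estar 0))
    (hAsi : ∀ i, Asi i ∈ Algebra.adjoin F {Astar} ∧
      Asi i * E 0 = ν • (E i * Estar 0 * E 0))
    (μ μs : Fin (d + 1) → Fin (d + 1) → F)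
    (hμ : ∀ i j, Ai i * E j = μ i j • E j)
    (hμs : ∀ i j, Asi i * Estar j = μs i j • Estar j) :
    ∀ i j, μ i j * μs j 0 = μs j i * μ i 0 := by
  intro i j
  obtain ⟨-, hSO, hSOs⟩ := hLS
  obtain ⟨⟨hEne, hEE, hEsum, θ, hθ, hAeq⟩, -⟩ := hSO
  obtain ⟨⟨hEsne, hEsEs, hEssum, θs, hθs, hAseq⟩, b, -, hTri, hDiag⟩ := hSOs
  obtain ⟨σ, hσmul, hσ1, hσA, hσAs⟩ := aw_antihom A Astar b hTri hDiag
  have hfixE : ∀ m, σ (E m) = E m := aw_fixes σ hσmul hσ1 A hσA E θ hθ hEE hEsum hAeq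
  have hfixEs : ∀ m, σ (Estar m) = Estar m :=
    aw_fixes σ hσmul hσ1 Astar hσAs Estar θs hθs hEsEs hEssum hAseq
  have hcE : ∀ i' j', E j' * Ai i' = μ i' j' • E j' := by
    intro i' j'
    have hs := aw_spectral A E θ hEE hAeq j'
    have hcomm : Commute (E j') (Ai i') :=
      Algebra.commute_of_mem_adjoin_singleton_of_commute (hAi i').1 (hs.2.trans hs.1.symm)
    rw [hcomm.eq, hμ]
  have hcEs : ∀ i' j', Estar j' * Asi i' = μs i' j' • Estar j' := by
    intro i' j'
    have hs := aw_spectral Astar Estar θs hEsEs hAseq j'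
    have hcomm : Commute (Estar j') (Asi i') :=
      Algebra.commute_of_mem_adjoin_singleton_of_commute (hAsi i').1 (hs.2.trans hs.1.symm)
    rw [hcomm.eq, hμs]
  have hI : ∀ i' j', E j' * Estar i' * E 0 = μ i' j' • (E j' * Estar 0 * E 0) := by
    intro i' j'
    have h1 : E j' * Ai i' * Estar 0 * E 0 = μ i' j' • (E j' * Estar 0 * E 0) := by
      rw [hcE i' j', smul_mul_assoc, smul_mul_assoc]
    have h2 : E j' * Ai i' * Estar 0 * E 0 = E j' * Estar i' * E 0 := by
      rw [mul_assoc (E j') (Ai i') (Estar 0), (hAi i').2, mul_smul_comm, smul_mul_assoc]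
      have hassoc : E j' * (Estar i' * E 0 * Estar 0) * E 0
          = E j' * Estar i' * (E 0 * Estar 0 * E 0) := by noncomm_ring
      rw [hassoc, ← mul_smul_comm, hν1]
    rw [← h2, h1]
  have hII : ∀ i' j', Estar i' * E j' * Estar 0 = μs j' i' • (Estar i' * E 0 * Estar 0) := by
    intro i' j'
    have h1 : Estar i' * Asi j' * E 0 * Estar 0 = μs j' i' • (Estar i' * E 0 * Estar 0) := by
      rw [hcEs j' i', smul_mul_assoc, smul_mul_assoc]
    have h2 : Estar i' * Asi j' * E 0 * Estar 0 = Estar i' * E j' * Estar 0 := by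
      rw [mul_assoc (Estar i') (Asi j') (E 0), (hAsi j').2, mul_smul_comm, smul_mul_assoc]
      have hassoc : Estar i' * (E j' * Estar 0 * E 0) * Estar 0
          = Estar i' * E j' * (Estar 0 * E 0 * Estar 0) := by noncomm_ring
      rw [hassoc, ← mul_smul_comm, hν2]
    rw [← h2, h1]
  have hν1' : E 0 * Estar 0 * E 0 = ν⁻¹ • E 0 := by
    have h := congrArg (fun X => ν⁻¹ • X) hν1
    simpa [smul_smul, inv_mul_cancel₀ hν0] using h
  have hν2' : Estar 0 * E 0 * Estar 0 = ν⁻¹ • Estar 0 := by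
    have h := congrArg (fun X => ν⁻¹ • X) hν2
    simpa [smul_smul, inv_mul_cancel₀ hν0] using h
  have hγ : E 0 * Estar i * E 0 = (μ i 0 * ν⁻¹) • E 0 := by
    rw [hI i 0, hν1', smul_smul]
  have hδ : Estar 0 * E j * Estar 0 = (μs j 0 * ν⁻¹) • Estar 0 := by
    rw [hII 0 j, hν2', smul_smul]
  have cW1 : E 0 * Estar 0 * E j * Estar i * E 0
      = (μ i j * (μs j 0 * ν⁻¹ * ν⁻¹)) • E 0 := by
    have a1 : E 0 * Estar 0 * E j * Estar i * E 0
        = E 0 * Estar 0 * (E j * Estar i * E 0) := by noncomm_ring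
    rw [a1, hI i j, mul_smul_comm]
    have a2 : E 0 * Estar 0 * (E j * Estar 0 * E 0)
        = E 0 * (Estar 0 * E j * Estar 0) * E 0 := by noncomm_ring
    rw [a2, hδ, mul_smul_comm, smul_mul_assoc, hν1', smul_smul, smul_smul]
    congr 1
    ring
  have cW2 : E 0 * Estar i * E j * Estar 0 * E 0
      = (μs j i * (μ i 0 * ν⁻¹ * ν⁻¹)) • E 0 := by
    have a1 : E 0 * Estar i * E j * Estar 0 * E 0
        = E 0 * (Estar i * E j * Estar 0) * E 0 := by noncomm_ring
    rw [a1, hII i j, mul_smul_comm, smul_mul_assoc]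
    have a2 : E 0 * (Estar i * E 0 * Estar 0) * E 0
        = E 0 * Estar i * (E 0 * Estar 0 * E 0) := by noncomm_ring
    rw [a2, hν1', mul_smul_comm, hγ, smul_smul, smul_smul]
    congr 1
    ring
  have hσW : σ (E 0 * Estar 0 * E j * Estar i * E 0) = E 0 * Estar i * E j * Estar 0 * E 0 := by
    simp only [hσmul, hfixE, hfixEs]
    noncomm_ring
  have t1 := congrArg σ cW1
  rw [map_smul, hfixE 0, hσW, cW2] at t1
  have hs : μs j i * (μ i 0 * ν⁻¹ * ν⁻¹) = μ i j * (μs j 0 * ν⁻¹ * ν⁻¹) := by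
    by_contra hne
    have h0 : (μs j i * (μ i 0 * ν⁻¹ * ν⁻¹) - μ i j * (μs j 0 * ν⁻¹ * ν⁻¹)) • E 0 = 0 := by
      rw [sub_smul, t1, sub_self]
    exact hEne 0 (by
      simpa [smul_smul, inv_mul_cancel₀ (sub_ne_zero.mpr hne)] using
        congrArg (fun X => (μs j i * (μ i 0 * ν⁻¹ * ν⁻¹)
          - μ i j * (μs j 0 * ν⁻¹ * ν⁻¹))⁻¹ • X) h0)
  field_simp at hs
  linear_combination -hs
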